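/- Let X be a Banach space isomorphic to ℓ_p (1 ≤ p < ∞) or c₀, and T ∈ L(X). If there exists an infinite-dimensional closed subspace Y ⊆ X such that T restricted to Y is an isomorphism and d(Y, T(Y)) > 0, then T − λI is not compact for any scalar λ. -/

import Mathlib

open ENNReal ZeroAtInfty

/-- The distance `d(X,Y) = inf {‖x - y‖ : x ∈ S_X, y ∈ Y}` between subspaces. -/
noncomputable def subspaceDist {Z : Type*} [NormedAddCommGroup Z] [NormedSpace ℂ Z]
    (X Y : Submodule ℂ Z) : ℝ :=
  sInf {r : ℝ | ∃ x ∈ X, ‖x‖ = 1 ∧ ∃ y ∈ Y, r = ‖x - y‖}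

/-- A compact operator bounded below on a closed subspace forces the subspace to be
finite dimensional. -/
lemma finiteDimensional_of_compact_boundedBelow {X : Type*} [NormedAddCommGroup X]
    [NormedSpace ℂ X] [CompleteSpace X] (K : X →L[ℂ] X) (hK : IsCompactOperator K)
    (Y : Submodule ℂ X) (hYc : IsClosed (Y : Set X)) {c : ℝ} (hc : 0 < c)
    (hb : ∀ y ∈ Y, c * ‖y‖ ≤ ‖K y‖) : FiniteDimensional ℂ Y := by
  set S : Set X := (Y : Set X) ∩ Metric.closedBall 0 1 with hS
  -- the image of S under K is totally bounded
  obtain ⟨C, hCcomp, hCsub⟩ :=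
    hK.image_subset_compact_of_isVonNBounded
      ((NormedSpace.isVonNBounded_closedBall ℂ X 1).subset Set.inter_subset_right)
  have himg : TotallyBounded (K '' S) := hCcomp.totallyBounded.subset hCsub
  -- hence S itself is totally bounded
  have hStb : TotallyBounded S := by
    rw [Metric.totallyBounded_iff]
    intro ε hε
    obtain ⟨t, ht, hcov⟩ := Metric.totallyBounded_iff.1 himg (c * ε / 2) (by positivity)
    classical
    refine ⟨(fun y => if h : ∃ x ∈ S, K x ∈ Metric.ball y (c * ε / 2) then h.choose else 0) '' t,
      ht.image _, ?_⟩
    intro x hx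
    obtain ⟨y, hyt, hKxy⟩ := Set.mem_iUnion₂.1 (hcov (Set.mem_image_of_mem K hx))
    have hex : ∃ x ∈ S, K x ∈ Metric.ball y (c * ε / 2) := ⟨x, hx, hKxy⟩
    obtain ⟨hx'S, hKx'⟩ := hex.choose_spec
    refine Set.mem_iUnion₂.2 ⟨_, Set.mem_image_of_mem _ hyt, ?_⟩
    rw [dif_pos hex]
    have hdiff : x - hex.choose ∈ Y := Y.sub_mem hx.1 hx'S.1
    have h1 : c * ‖x - hex.choose‖ ≤ ‖K (x - hex.choose)‖ := hb _ hdiff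
    have h2 : ‖K (x - hex.choose)‖ < c * ε := by
      rw [map_sub]
      have ha := Metric.mem_ball.1 hKxy
      have hb' := Metric.mem_ball.1 hKx'
      rw [dist_eq_norm] at ha hb'
      calc ‖K x - K hex.choose‖ ≤ ‖K x - y‖ + ‖y - K hex.choose‖ :=
            norm_sub_le_norm_sub_add_norm_sub _ _ _
        _ < c * ε := by
          have h3 : ‖y - K hex.choose‖ = ‖K hex.choose - y‖ := norm_sub_rev _ _
          linarith
    rw [Metric.mem_ball, dist_eq_norm]
    nlinarith
  -- S is complete (closed in a complete space), hence compact
  have hSclosed : IsClosed S := hYc.inter Metric.isClosed_closedBall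
  have hScomp : IsCompact S :=
    isCompact_iff_totallyBounded_isComplete.2 ⟨hStb, hSclosed.isComplete⟩
  -- pull back to the closed unit ball of Y
  have hball : IsCompact (Metric.closedBall (0 : Y) 1) := by
    have hemb : Topology.IsClosedEmbedding ((↑) : Y → X) :=
      ⟨Topology.IsEmbedding.subtypeVal, by simpa using hYc⟩
    have : Metric.closedBall (0 : Y) 1 = ((↑) : Y → X) ⁻¹' S := by
      ext z
      simp [S, Metric.mem_closedBall, dist_eq_norm, Submodule.coe_norm]
    rw [this]
    exact hemb.isCompact_preimage hScomp
  exact FiniteDimensional.of_isCompact_closedBall₀ ℂ one_pos hball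

/-- Let `X` be isomorphic to `ℓ_p` (`1 ≤ p < ∞`) or `c₀` and `T ∈ L(X)`. If there is an
infinite-dimensional closed subspace `Y` on which `T` is an isomorphism with
`d(Y, T(Y)) > 0`, then `T − λI` is not compact for any `λ`. -/
theorem not_compact_of_moved_subspace {X : Type*} [NormedAddCommGroup X] [NormedSpace ℂ X]
    [CompleteSpace X]
    (hX : (∃ p : ℝ≥0∞, ∃ _ : Fact (1 ≤ p), p ≠ ∞ ∧
            Nonempty (X ≃L[ℂ] lp (fun _ : ℕ => ℂ) p)) ∨
          Nonempty (X ≃L[ℂ] C₀(ℕ, ℂ)))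
    (T : X →L[ℂ] X) (Y : Submodule ℂ X) (hYc : IsClosed (Y : Set X))
    (hYinf : ¬ FiniteDimensional ℂ Y)
    (hiso : ∃ c > 0, ∀ y ∈ Y, c * ‖y‖ ≤ ‖T y‖)
    (hdist : 0 < subspaceDist Y (Y.map (T : X →ₗ[ℂ] X))) :
    ∀ lam : ℂ, ¬ IsCompactOperator (T - lam • ContinuousLinearMap.id ℂ X) := by
  intro lam hcompact
  rcases eq_or_ne lam 0 with rfl | hlam
  · -- `T` itself would be compact, but it is bounded below on `Y`
    obtain ⟨c, hc, hb⟩ := hiso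
    have hTc : IsCompactOperator (T : X →L[ℂ] X) := by
      simpa using hcompact
    exact hYinf (finiteDimensional_of_compact_boundedBelow T hTc Y hYc hc hb)
  · -- `T - lam` is bounded below on `Y` by `‖lam‖ * d`
    set d := subspaceDist Y (Y.map (T : X →ₗ[ℂ] X)) with hd
    have hbelow : ∀ y ∈ Y, (‖lam‖ * d) * ‖y‖ ≤ ‖(T - lam • ContinuousLinearMap.id ℂ X) y‖ := by
      intro y hy
      rcases eq_or_ne y 0 with rfl | hy0
      · simp
      · have hny : (0:ℝ) < ‖y‖ := norm_pos_iff.2 hy0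
        set u : X := (‖y‖⁻¹ : ℂ) • y with hu
        have huY : u ∈ Y := Y.smul_mem _ hy
        have hunorm : ‖u‖ = 1 := by
          rw [hu, norm_smul]
          simp [hny.ne']
        -- the element `lam⁻¹ • T u` lies in `T(Y)`
        have hwmem : lam⁻¹ • T u ∈ Y.map (T : X →ₗ[ℂ] X) := by
          refine ⟨lam⁻¹ • u, Y.smul_mem _ huY, by simp⟩
        have hdle : d ≤ ‖u - lam⁻¹ • T u‖ := by
          apply csInf_le
          · exact ⟨0, fun r ⟨x, _, _, w, _, hr⟩ => by simp [hr, norm_nonneg]⟩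
          · exact ⟨u, huY, hunorm, lam⁻¹ • T u, hwmem, rfl⟩
        have hkey : ‖u - lam⁻¹ • T u‖ = ‖lam‖⁻¹ * ‖(T - lam • ContinuousLinearMap.id ℂ X) u‖ := by
          have hinv : lam⁻¹ * lam = 1 := inv_mul_cancel₀ hlam
          have : u - lam⁻¹ • T u = (-lam⁻¹) • ((T - lam • ContinuousLinearMap.id ℂ X) u) := by
            simp only [ContinuousLinearMap.sub_apply, ContinuousLinearMap.smul_apply,
              ContinuousLinearMap.id_apply]
            match_scalars <;> field_simp
          rw [this, norm_smul]
          simp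
        have hu_eval : (T - lam • ContinuousLinearMap.id ℂ X) u
            = (‖y‖⁻¹ : ℂ) • ((T - lam • ContinuousLinearMap.id ℂ X) y) := by
          rw [hu, map_smul]
        have hnormeval : ‖(T - lam • ContinuousLinearMap.id ℂ X) u‖
            = ‖y‖⁻¹ * ‖(T - lam • ContinuousLinearMap.id ℂ X) y‖ := by
          rw [hu_eval, norm_smul]
          simp
        have hlampos : (0:ℝ) < ‖lam‖ := norm_pos_iff.2 hlam
        have : d ≤ ‖lam‖⁻¹ * (‖y‖⁻¹ * ‖(T - lam • ContinuousLinearMap.id ℂ X) y‖) := by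
          rw [← hnormeval, ← hkey]; exact hdle
        have hN : ‖lam‖ * ‖y‖ * (‖lam‖⁻¹ * (‖y‖⁻¹ * ‖(T - lam • ContinuousLinearMap.id ℂ X) y‖))
            = ‖(T - lam • ContinuousLinearMap.id ℂ X) y‖ := by
          have h0 : ‖lam‖ * ‖y‖ ≠ 0 := by positivity
          field_simp
        calc (‖lam‖ * d) * ‖y‖ = ‖lam‖ * ‖y‖ * d := by ring
          _ ≤ ‖lam‖ * ‖y‖ * (‖lam‖⁻¹ * (‖y‖⁻¹ * ‖(T - lam • ContinuousLinearMap.id ℂ X) y‖)) :=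
            mul_le_mul_of_nonneg_left this (by positivity)
          _ = _ := hN
    have hpos : (0:ℝ) < ‖lam‖ * d := mul_pos (norm_pos_iff.2 hlam) hdist
    exact hYinf (finiteDimensional_of_compact_boundedBelow _ hcompact Y hYc hpos hbelow)
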